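/- Let H be a complex Hilbert space and let γ and P be bounded self-adjoint operators on H with 0 ≤ γ ≤ 1 and 0 ≤ P ≤ 1, both of trace class, with Tr γ = Tr P. Then Tr(γ(1-γ)) ≤ 2 Tr((1-P)γ). -/

import Mathlib

set_option synthInstance.maxHeartbeats 1000000
set_option maxHeartbeats 1000000

variable {H : Type*} [NormedAddCommGroup H] [InnerProductSpace ℂ H] [CompleteSpace H]

/-- The trace of a bounded operator computed via a Hilbert basis `b`
(real part of the diagonal sum).  For trace-class operators this is the trace. -/
noncomputable def traceIn {ι : Type*} (b : HilbertBasis ι ℂ H) (A : H →L[ℂ] H) : ℝ :=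
  ∑' i, ((inner ℂ (b i) (A (b i)) : ℂ)).re

/-- `re ⟪y, y⟫ = ‖y‖²` for the complex inner product, with `Complex.re`. -/
lemma re_inner_self (y : H) : ((inner ℂ y y : ℂ)).re = ‖y‖ ^ 2 := by
  have := inner_self_eq_norm_sq (𝕜 := ℂ) y
  simpa [RCLike.re_to_complex] using this

/-- For `0 ≤ P ≤ 1`, pointwise `‖P x‖² ≤ re ⟪x, P x⟫`. -/
lemma key_ineq (P : H →L[ℂ] H) (hPsa : IsSelfAdjoint P) (hP0 : 0 ≤ P) (hP1 : P ≤ 1) (x : H) :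
    ‖P x‖ ^ 2 ≤ ((inner ℂ x (P x) : ℂ)).re := by
  have hsym : ∀ u v : H, (inner ℂ (P u) v : ℂ) = inner ℂ u (P v) :=
    (ContinuousLinearMap.isSelfAdjoint_iff_isSymmetric.mp hPsa)
  have hPpos := (ContinuousLinearMap.nonneg_iff_isPositive P).mp hP0
  have h1Ppos := (ContinuousLinearMap.nonneg_iff_isPositive (1 - P)).mp (sub_nonneg.mpr hP1)
  have h1 : 0 ≤ ((inner ℂ (x - P x) (P (x - P x)) : ℂ)).re := hPpos.re_inner_nonneg_right _
  have h2 : 0 ≤ ((inner ℂ (P x) ((1 - P) (P x)) : ℂ)).re := h1Ppos.re_inner_nonneg_right _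
  have hre : ((inner ℂ (P x) x : ℂ)).re = ((inner ℂ x (P x) : ℂ)).re := by
    rw [← inner_conj_symm]; exact Complex.conj_re _
  have hPP : ((inner ℂ x (P (P x)) : ℂ)).re = ‖P x‖ ^ 2 := by
    rw [← hsym x (P x)]
    exact re_inner_self (P x)
  have e1 : ((inner ℂ (x - P x) (P (x - P x)) : ℂ)).re
      = ((inner ℂ x (P x) : ℂ)).re - ‖P x‖ ^ 2 - ‖P x‖ ^ 2
        + ((inner ℂ (P x) (P (P x)) : ℂ)).re := by
    rw [map_sub, inner_sub_left, inner_sub_right, inner_sub_right]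
    simp only [Complex.sub_re]
    rw [hPP]
    have : ((inner ℂ (P x) (P x) : ℂ)).re = ‖P x‖ ^ 2 := re_inner_self (P x)
    rw [this]
    ring
  have e2 : ((inner ℂ (P x) ((1 - P) (P x)) : ℂ)).re
      = ‖P x‖ ^ 2 - ((inner ℂ (P x) (P (P x)) : ℂ)).re := by
    rw [ContinuousLinearMap.sub_apply, ContinuousLinearMap.one_apply, inner_sub_right]
    simp only [Complex.sub_re]
    rw [re_inner_self (P x)]
  rw [e1] at h1
  rw [e2] at h2
  linarith

/-- If `γ`, `P` are self-adjoint trace-class operators on a complex Hilbert space with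
`0 ≤ γ ≤ 1`, `0 ≤ P ≤ 1` and `Tr γ = Tr P`, then `Tr (γ(1-γ)) ≤ 2 Tr ((1-P)γ)`. -/
theorem stmt0 {ι : Type*} (b : HilbertBasis ι ℂ H) (γ P : H →L[ℂ] H)
    (hγsa : IsSelfAdjoint γ) (hPsa : IsSelfAdjoint P)
    (hγ0 : 0 ≤ γ) (hγ1 : γ ≤ 1) (hP0 : 0 ≤ P) (hP1 : P ≤ 1)
    (hsγ : Summable fun i => ((inner ℂ (b i) (γ (b i)) : ℂ)).re)
    (hsP : Summable fun i => ((inner ℂ (b i) (P (b i)) : ℂ)).re)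
    (hs1 : Summable fun i => ((inner ℂ (b i) ((γ * (1 - γ)) (b i)) : ℂ)).re)
    (hs2 : Summable fun i => ((inner ℂ (b i) (((1 - P) * γ) (b i)) : ℂ)).re)
    (htr : traceIn b γ = traceIn b P) :
    traceIn b (γ * (1 - γ)) ≤ 2 * traceIn b ((1 - P) * γ) := by
  have hγsym : ∀ u v : H, (inner ℂ (γ u) v : ℂ) = inner ℂ u (γ v) :=
    (ContinuousLinearMap.isSelfAdjoint_iff_isSymmetric.mp hγsa)
  have hPsym : ∀ u v : H, (inner ℂ (P u) v : ℂ) = inner ℂ u (P v) :=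
    (ContinuousLinearMap.isSelfAdjoint_iff_isSymmetric.mp hPsa)
  -- notation for the diagonal entries
  set f : ι → ℝ := fun i => ((inner ℂ (b i) (γ (b i)) : ℂ)).re with hf
  set p : ι → ℝ := fun i => ((inner ℂ (b i) (P (b i)) : ℂ)).re with hp
  set g : ι → ℝ := fun i => ((inner ℂ (b i) (γ (γ (b i))) : ℂ)).re with hg
  set q : ι → ℝ := fun i => ((inner ℂ (b i) (P (γ (b i))) : ℂ)).re with hq
  -- pointwise identities for the two composite operators
  have id1 : ∀ i, ((inner ℂ (b i) ((γ * (1 - γ)) (b i)) : ℂ)).re = f i - g i := by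
    intro i
    simp only [ContinuousLinearMap.mul_apply, ContinuousLinearMap.sub_apply,
      ContinuousLinearMap.one_apply, map_sub, inner_sub_right, Complex.sub_re, hf, hg]
  have id2 : ∀ i, ((inner ℂ (b i) (((1 - P) * γ) (b i)) : ℂ)).re = f i - q i := by
    intro i
    simp only [ContinuousLinearMap.mul_apply, ContinuousLinearMap.sub_apply,
      ContinuousLinearMap.one_apply, inner_sub_right, Complex.sub_re, hf, hq]
  -- summability of g and q
  have hs1' : Summable (fun i => f i - g i) := by
    simpa only [id1] using hs1
  have hs2' : Summable (fun i => f i - q i) := by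
    simpa only [id2] using hs2
  have hgsum : Summable g := by
    have := hsγ.sub hs1'
    simpa using this
  have hqsum : Summable q := by
    have := hsγ.sub hs2'
    simpa using this
  -- the key pointwise nonnegativity: p i - 2 q i + g i ≥ 0
  have hpt : ∀ i, 0 ≤ p i - 2 * q i + g i := by
    intro i
    set x := b i
    have hq' : q i = ((inner ℂ (P x) (γ x) : ℂ)).re := by
      have h0 : q i = ((inner ℂ x (P (γ x)) : ℂ)).re := rfl
      rw [h0, ← hPsym x (γ x)]
    have hg' : g i = ‖γ x‖ ^ 2 := by
      have h0 : g i = ((inner ℂ x (γ (γ x)) : ℂ)).re := rfl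
      rw [h0, ← hγsym x (γ x)]
      exact re_inner_self (γ x)
    have hkey : ‖P x‖ ^ 2 ≤ p i := key_ineq P hPsa hP0 hP1 x
    have hsq : (0 : ℝ) ≤ ‖P x - γ x‖ ^ 2 := sq_nonneg _
    have hexp : ‖P x - γ x‖ ^ 2
        = ‖P x‖ ^ 2 - 2 * ((inner ℂ (P x) (γ x) : ℂ)).re + ‖γ x‖ ^ 2 := by
      rw [← re_inner_self (P x - γ x)]
      rw [inner_sub_left, inner_sub_right, inner_sub_right]
      simp only [Complex.sub_re]
      rw [re_inner_self (P x), re_inner_self (γ x)]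
      have : ((inner ℂ (γ x) (P x) : ℂ)).re = ((inner ℂ (P x) (γ x) : ℂ)).re := by
        rw [← inner_conj_symm]; exact Complex.conj_re _
      rw [this]; ring
    rw [hexp] at hsq
    rw [hq', hg']
    linarith
  -- sum up
  have hcomb : Summable (fun i => p i - 2 * q i + g i) :=
    (hsP.sub ((hqsum.mul_left 2))).add hgsum
  have hsum_nonneg : 0 ≤ ∑' i, (p i - 2 * q i + g i) := tsum_nonneg hpt
  have htsum : ∑' i, (p i - 2 * q i + g i)
      = (∑' i, p i) - 2 * (∑' i, q i) + ∑' i, g i := by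
    rw [Summable.tsum_add (hsP.sub (hqsum.mul_left 2)) hgsum,
      Summable.tsum_sub hsP (hqsum.mul_left 2), tsum_mul_left]
  -- rewrite the goal
  have e1 : traceIn b (γ * (1 - γ)) = (∑' i, f i) - ∑' i, g i := by
    rw [traceIn]
    rw [tsum_congr id1]
    exact Summable.tsum_sub hsγ hgsum
  have e2 : traceIn b ((1 - P) * γ) = (∑' i, f i) - ∑' i, q i := by
    rw [traceIn]
    rw [tsum_congr id2]
    exact Summable.tsum_sub hsγ hqsum
  have htr' : (∑' i, f i) = ∑' i, p i := htr
  rw [e1, e2]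
  rw [htsum] at hsum_nonneg
  linarith
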